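/- Let d ≥ 1, D ∈ ℝ^{d×d}, let γ : (0,∞) → ℝ^{d×d} be Bochner integrable, and let r be the differential resolvent of γ with drift matrix D; assume r is bounded on [0,∞). Then for every ζ ∈ ℂ with Re ζ > 0 the Laplace transforms Lr(ζ) = ∫₀^∞ e^{−ζt} r(t) dt and Lγ(ζ) = ∫₀^∞ e^{−ζt} γ(t) dt are well defined and satisfy (ζ I + D + Lγ(ζ)) · Lr(ζ) = I; in particular, the matrix Lr(ζ) is invertible for every ζ with Re ζ > 0. -/

import Mathlib

open MeasureTheory Matrix Set Filter
open scoped Matrix.Norms.L2Operator Real Topology ComplexOrder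

noncomputable section

/-- `r` (with derivative `r'`) is the differential resolvent of the kernel `γ` with drift
matrix `D`: `r` is continuously differentiable on `[0,∞)`, `r(0) = I`, and
`r′(t) = -D r(t) - ∫₀ᵗ γ(t-s) r(s) ds = -r(t) D - ∫₀ᵗ r(t-s) γ(s) ds` for all `t ≥ 0`. -/
structure IsDiffResolvent {d : ℕ} (D : Matrix (Fin d) (Fin d) ℝ)
    (γ r r' : ℝ → Matrix (Fin d) (Fin d) ℝ) : Prop where
  init : r 0 = 1
  hasDeriv : ∀ t ∈ Ici (0 : ℝ), HasDerivWithinAt r (r' t) (Ici 0) t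
  contDeriv : ContinuousOn r' (Ici 0)
  eq_left : ∀ t ∈ Ici (0 : ℝ), r' t = -(D * r t) - ∫ s in (0 : ℝ)..t, γ (t - s) * r s
  eq_right : ∀ t ∈ Ici (0 : ℝ), r' t = -(r t * D) - ∫ s in (0 : ℝ)..t, r (t - s) * γ s

/-- Entrywise Laplace transform `Lh(ζ) = ∫₀^∞ e^{-ζt} h(t) dt` of a matrix-valued function. -/
def laplaceMat {d : ℕ} (h : ℝ → Matrix (Fin d) (Fin d) ℝ) (z : ℂ) :
    Matrix (Fin d) (Fin d) ℂ :=
  ∫ t in Ioi (0 : ℝ), Complex.exp (-(z * t)) • (h t).map Complex.ofReal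

def mapCLM (d : ℕ) : Matrix (Fin d) (Fin d) ℝ →L[ℝ] Matrix (Fin d) (Fin d) ℂ :=
  LinearMap.toContinuousLinearMap
    { toFun := fun A => A.map Complex.ofReal
      map_add' := by intro A B; ext i j; simp
      map_smul' := by intro c A; ext i j; simp }

lemma mapCLM_apply {d : ℕ} (A : Matrix (Fin d) (Fin d) ℝ) :
    mapCLM d A = A.map Complex.ofReal := rfl

lemma mapCLM_mul {d : ℕ} (A B : Matrix (Fin d) (Fin d) ℝ) :
    mapCLM d (A * B) = mapCLM d A * mapCLM d B := by
  simp only [mapCLM_apply]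
  exact Matrix.map_mul (f := Complex.ofRealHom)

lemma mapCLM_one {d : ℕ} : mapCLM d (1 : Matrix (Fin d) (Fin d) ℝ) = 1 := by
  simp only [mapCLM_apply]
  exact Matrix.map_one _ Complex.ofReal_zero Complex.ofReal_one

/-- if the differential resolvent `r` is bounded on `[0,∞)`, then its Laplace
transform satisfies `(ζ I + D + Lγ(ζ)) Lr(ζ) = I` for `Re ζ > 0`; in particular `Lr(ζ)` is
invertible. -/
theorem laplace_resolvent_identity {d : ℕ} (hd : 1 ≤ d)
    (D : Matrix (Fin d) (Fin d) ℝ)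
    (γ r r' : ℝ → Matrix (Fin d) (Fin d) ℝ)
    (hγ : IntegrableOn γ (Ioi 0))
    (hr : IsDiffResolvent D γ r r')
    (hrb : ∃ C : ℝ, ∀ t ∈ Ici (0 : ℝ), ‖r t‖ ≤ C) :
    ∀ ζ : ℂ, 0 < ζ.re →
      IntegrableOn (fun t : ℝ => Complex.exp (-(ζ * t)) • (r t).map Complex.ofReal)
        (Ioi 0) ∧
      IntegrableOn (fun t : ℝ => Complex.exp (-(ζ * t)) • (γ t).map Complex.ofReal)
        (Ioi 0) ∧
      (ζ • (1 : Matrix (Fin d) (Fin d) ℂ) + D.map Complex.ofReal + laplaceMat γ ζ) *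
          laplaceMat r ζ = 1 ∧
      IsUnit (laplaceMat r ζ) := by
  intro ζ hζ
  obtain ⟨C, hC⟩ := hrb
  have hC0 : 0 ≤ C := le_trans (norm_nonneg _) (hC 0 self_mem_Ici)
  set M := Matrix (Fin d) (Fin d) ℂ
  set φ : ℝ → ℂ := fun t => Complex.exp (-(ζ * t)) with hφdef
  set F : ℝ → M := fun t => φ t • mapCLM d (r t) with hFdef
  set G : ℝ → M := fun t => φ t • mapCLM d (γ t) with hGdef
  have hφnorm : ∀ t : ℝ, ‖φ t‖ = Real.exp (-(ζ.re * t)) := by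
    intro t
    rw [hφdef]
    rw [Complex.norm_exp]
    congr 1
    simp [Complex.mul_re]
  have hφcont : Continuous φ := Complex.continuous_exp.comp (by continuity)
  have hφle : ∀ t : ℝ, 0 ≤ t → ‖φ t‖ ≤ 1 := by
    intro t ht
    rw [hφnorm, Real.exp_le_one_iff, neg_nonpos]
    positivity
  have hrc : ContinuousOn r (Ici 0) := fun t ht =>
    (hr.hasDeriv t ht).continuousWithinAt
  have hFcont : ContinuousOn F (Ici 0) :=
    (hφcont.continuousOn).smul ((mapCLM d).continuous.comp_continuousOn hrc)
  -- integrability of F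
  have hF : IntegrableOn F (Ioi 0) := by
    refine Integrable.mono' (g := fun t => (‖mapCLM d‖ * C) * Real.exp (-ζ.re * t)) ?_ ?_ ?_
    · exact ((exp_neg_integrableOn_Ioi 0 hζ).const_mul _)
    · exact (hFcont.mono Ioi_subset_Ici_self).aestronglyMeasurable measurableSet_Ioi
    · filter_upwards [ae_restrict_mem measurableSet_Ioi] with t ht
      have ht0 : (0:ℝ) ≤ t := le_of_lt ht
      rw [hFdef]
      simp only
      rw [norm_smul, hφnorm]
      have h1 : ‖mapCLM d (r t)‖ ≤ ‖mapCLM d‖ * C := by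
        refine le_trans ((mapCLM d).le_opNorm _) ?_
        exact mul_le_mul_of_nonneg_left (hC t ht0) (norm_nonneg _)
      calc Real.exp (-(ζ.re * t)) * ‖mapCLM d (r t)‖
          ≤ Real.exp (-(ζ.re * t)) * (‖mapCLM d‖ * C) := by
            exact mul_le_mul_of_nonneg_left h1 (Real.exp_nonneg _)
        _ = ‖mapCLM d‖ * C * Real.exp (-ζ.re * t) := by rw [neg_mul]; ring
  -- integrability of G
  have hγm : Integrable (fun t => mapCLM d (γ t)) (volume.restrict (Ioi 0)) :=
    (mapCLM d).integrable_comp hγ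
  have hG : IntegrableOn G (Ioi 0) := by
    refine Integrable.mono' (g := fun t => ‖mapCLM d (γ t)‖) hγm.norm ?_ ?_
    · exact (hφcont.aestronglyMeasurable.restrict).smul hγm.aestronglyMeasurable
    · filter_upwards [ae_restrict_mem measurableSet_Ioi] with t ht
      rw [hGdef]
      simp only
      rw [norm_smul]
      exact mul_le_of_le_one_left (norm_nonneg _) (hφle t (le_of_lt ht))
  refine ⟨hF, hG, ?_⟩
  -- the multiplication bilinear map (flipped)
  set L : M →L[ℝ] M →L[ℝ] M := (ContinuousLinearMap.mul ℝ M).flip with hLdef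
  have hLapp : ∀ a b : M, L a b = b * a := fun a b => rfl
  -- interval integrability of the convolution integrand
  have hInt : ∀ x : ℝ, 0 < x → IntervalIntegrable (fun t => γ (x - t) * r t) volume 0 x := by
    intro x hx
    have hγx : IntervalIntegrable (fun t => γ (x - t)) volume 0 x := by
      have h1 : IntervalIntegrable γ volume 0 x := by
        rw [intervalIntegrable_iff_integrableOn_Ioc_of_le hx.le]
        exact hγ.mono_set Ioc_subset_Ioi_self
      have h2 := h1.comp_sub_left x
      simpa using h2.symm
    rw [intervalIntegrable_iff_integrableOn_Ioc_of_le hx.le] at hγx ⊢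
    refine Integrable.mono' (g := fun t => ‖γ (x - t)‖ * C) (hγx.norm.mul_const C) ?_ ?_
    · exact hγx.aestronglyMeasurable.mul
        (((hrc.mono (fun t ht => ht.1.le)).aestronglyMeasurable measurableSet_Ioc))
    · filter_upwards [ae_restrict_mem measurableSet_Ioc] with t ht
      exact le_trans (norm_mul_le _ _)
        (mul_le_mul_of_nonneg_left (hC t ht.1.le) (norm_nonneg _))
  -- pointwise identification of the Laplace-convolution integrand
  have hptconv : ∀ x ∈ Ioi (0:ℝ), (∫ t in (0:ℝ)..x, L (F t) (G (x - t))) =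
      φ x • mapCLM d (∫ s in (0:ℝ)..x, γ (x - s) * r s) := by
    intro x hx
    have hint : ∀ t : ℝ, L (F t) (G (x - t)) = φ x • mapCLM d (γ (x - t) * r t) := by
      intro t
      have hφmul : φ (x - t) * φ t = φ x := by
        rw [hφdef]
        simp only
        rw [← Complex.exp_add]
        congr 1
        push_cast
        ring
      calc L (F t) (G (x - t)) = (φ (x-t) • mapCLM d (γ (x-t))) * (φ t • mapCLM d (r t)) := rfl
        _ = (φ (x-t) * φ t) • (mapCLM d (γ (x-t)) * mapCLM d (r t)) := by
              rw [smul_mul_assoc, mul_smul_comm, smul_smul]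
        _ = φ x • mapCLM d (γ (x - t) * r t) := by rw [hφmul, mapCLM_mul]
    rw [intervalIntegral.integral_congr (g := fun t => φ x • mapCLM d (γ (x - t) * r t))
      (fun t _ => hint t)]
    rw [intervalIntegral.integral_smul, (mapCLM d).intervalIntegral_comp_comm (hInt x hx)]
  set Cv : ℝ → M := fun x => φ x • mapCLM d (∫ s in (0:ℝ)..x, γ (x - s) * r s) with hCvdef
  -- integrability of Cv on Ioi 0
  have hCvint : IntegrableOn Cv (Ioi 0) := by
    have h1 : Integrable (posConvolution F G L volume) volume := integrable_posConvolution hF hG L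
    unfold posConvolution at h1
    rw [integrable_indicator_iff measurableSet_Ioi] at h1
    exact h1.congr_fun (fun x hx => hptconv x hx) measurableSet_Ioi
  -- the integral of Cv
  have hCveq : ∫ x in Ioi 0, Cv x = (∫ x in Ioi 0, G x) * (∫ x in Ioi 0, F x) := by
    have h2 := integral_posConvolution hF hG L
    rw [setIntegral_congr_fun measurableSet_Ioi (fun x hx => hptconv x hx)] at h2
    exact h2
  set Dc : M := D.map Complex.ofReal with hDcdef
  have hDcm : Dc = mapCLM d D := rfl
  -- derivative of F on Ioi 0
  have hderivF : ∀ x ∈ Ioi (0:ℝ), HasDerivAt F (-(ζ • F x) - Dc * F x - Cv x) x := by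
    intro x hx
    have hrd : HasDerivAt r (r' x) x :=
      (hr.hasDeriv x (mem_Ici.mpr (le_of_lt hx))).hasDerivAt (Ici_mem_nhds hx)
    have hmapd : HasDerivAt (fun t => mapCLM d (r t)) (mapCLM d (r' x)) x :=
      (mapCLM d).hasFDerivAt.comp_hasDerivAt x hrd
    have hφd : HasDerivAt φ (-ζ * φ x) x := by
      have h0 : HasDerivAt (fun z : ℂ => Complex.exp (-(ζ * z)))
          (Complex.exp (-(ζ * (x:ℂ))) * -(ζ * 1)) (x : ℂ) :=
        (((hasDerivAt_id ((x:ℝ):ℂ)).const_mul ζ).neg).cexp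
      have h1 := h0.comp_ofReal
      rw [hφdef]
      simpa [mul_comm] using h1
    have h1 := hφd.smul hmapd
    have h1' : HasDerivAt F (φ x • mapCLM d (r' x) + (-ζ * φ x) • mapCLM d (r x)) x := h1
    convert h1' using 1
    rw [hr.eq_left x (mem_Ici.mpr (le_of_lt hx))]
    rw [map_sub, map_neg, hDcm, mapCLM_mul]
    rw [hFdef, hCvdef]
    simp only
    rw [mul_smul_comm]
    module
  -- integrability of the derivative
  have hDF : Integrable (fun x => Dc * F x) (volume.restrict (Ioi 0)) :=
    (ContinuousLinearMap.mul ℝ M Dc).integrable_comp hF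
  have hζF : Integrable (fun x => ζ • F x) (volume.restrict (Ioi 0)) := hF.smul ζ
  have hg : IntegrableOn (fun x => -(ζ • F x) - Dc * F x - Cv x) (Ioi 0) :=
    ((hζF.neg.sub hDF).sub hCvint)
  -- limit of F at infinity
  have htend : Tendsto F atTop (𝓝 0) := by
    have h2 : Tendsto (fun t : ℝ => ‖mapCLM d‖ * C * Real.exp (-(ζ.re * t))) atTop (𝓝 0) := by
      have h3 : Tendsto (fun t : ℝ => Real.exp (-(ζ.re * t))) atTop (𝓝 0) :=
        Real.tendsto_exp_atBot.comp
          (tendsto_neg_atTop_atBot.comp (Tendsto.const_mul_atTop hζ tendsto_id))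
      simpa using h3.const_mul (‖mapCLM d‖ * C)
    refine squeeze_zero_norm' ?_ h2
    · filter_upwards [eventually_ge_atTop (0:ℝ)] with t ht
      rw [hFdef]
      simp only
      rw [norm_smul, hφnorm]
      have h1 : ‖mapCLM d (r t)‖ ≤ ‖mapCLM d‖ * C :=
        le_trans ((mapCLM d).le_opNorm _)
          (mul_le_mul_of_nonneg_left (hC t ht) (norm_nonneg _))
      calc Real.exp (-(ζ.re * t)) * ‖mapCLM d (r t)‖
          ≤ Real.exp (-(ζ.re * t)) * (‖mapCLM d‖ * C) :=
            mul_le_mul_of_nonneg_left h1 (Real.exp_nonneg _)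
        _ = ‖mapCLM d‖ * C * Real.exp (-(ζ.re * t)) := by ring
  -- integration by parts
  have hbp : ∫ x in Ioi 0, (-(ζ • F x) - Dc * F x - Cv x) = 0 - F 0 :=
    integral_Ioi_of_hasDerivAt_of_tendsto (hFcont.continuousWithinAt self_mem_Ici)
      hderivF hg htend
  have hF0 : F 0 = 1 := by
    rw [hFdef]
    simp only
    rw [hr.init, mapCLM_one, hφdef]
    simp
  -- split the integral
  have hsplit : ∫ x in Ioi 0, (-(ζ • F x) - Dc * F x - Cv x)
      = -(ζ • (∫ x in Ioi 0, F x)) - Dc * (∫ x in Ioi 0, F x)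
        - (∫ x in Ioi 0, G x) * (∫ x in Ioi 0, F x) := by
    have hn1 : Integrable (fun x => -(ζ • F x)) (volume.restrict (Ioi 0)) := hζF.neg
    have hn2 : Integrable (fun x => -(ζ • F x) - Dc * F x) (volume.restrict (Ioi 0)) :=
      hn1.sub hDF
    rw [integral_sub hn2 hCvint, integral_sub hn1 hDF, integral_neg,
      integral_smul, hCveq]
    congr 2
    exact (ContinuousLinearMap.mul ℝ M Dc).integral_comp_comm hF
  have hLr : laplaceMat r ζ = ∫ x in Ioi 0, F x := rfl
  have hLγ : laplaceMat γ ζ = ∫ x in Ioi 0, G x := rfl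
  set Lr : M := ∫ x in Ioi 0, F x
  set Lγ : M := ∫ x in Ioi 0, G x
  have key : ζ • Lr + Dc * Lr + Lγ * Lr = 1 := by
    have h3 : -(ζ • Lr) - Dc * Lr - Lγ * Lr = -(1:M) := by
      rw [← hsplit, hbp, hF0, zero_sub]
    have h4 : -(ζ • Lr + Dc * Lr + Lγ * Lr) = -(1:M) := by rw [← h3]; abel
    exact neg_injective h4
  have hmain : (ζ • (1 : M) + Dc + Lγ) * Lr = 1 := by
    calc (ζ • (1:M) + Dc + Lγ) * Lr = ζ • Lr + Dc * Lr + Lγ * Lr := by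
          rw [add_mul, add_mul, smul_mul_assoc, one_mul]
      _ = 1 := key
  rw [hLr, hLγ]
  exact ⟨hmain, ⟨⟨Lr, ζ • (1:M) + Dc + Lγ, mul_eq_one_comm.mp hmain, hmain⟩, rfl⟩⟩
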